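/- Strict partitions λ with λ_1 ≤ n are in weight-preserving bijection with triples (i, j, μ) where i is odd with 1 ≤ i ≤ n, 0 ≤ j ≤ n - i, and μ is a partition fitting inside the j × i rectangle; under this bijection |λ| = i + j(j+1)/2 + |μ|. (Nonempty strict partitions only; the empty partition corresponds to no triple.) -/

import Mathlib

namespace SPB

/-! ### Basic list descent facts -/

lemma descent {L : List ℕ} (hs : L.Pairwise (· > ·)) :
    ∀ d p (hp : p + d < L.length), L[p + d]'hp + d ≤ L[p]'(by omega) := by
  intro d
  induction d with
  | zero => intro p hp; simp
  | succ d ih =>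
    intro p hp
    have h1 : L[p + d]'(by omega) + d ≤ L[p]'(by omega) := ih p (by omega)
    have h2 : L[p + d + 1]'(by omega) < L[p + d]'(by omega) := by
      have := hs.rel_get_of_lt (a := ⟨p + d, by omega⟩) (b := ⟨p + d + 1, by omega⟩)
        (by simp [Fin.lt_def])
      simpa [List.get_eq_getElem] using this
    have h3 : L[p + (d + 1)]'hp = L[p + d + 1]'(by omega) := rfl
    omega

lemma descent' {L : List ℕ} (hs : L.Pairwise (· > ·)) {p q : ℕ} (hpq : p ≤ q)
    (hq : q < L.length) : L[q] + (q - p) ≤ L[p]'(by omega) := by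
  have := descent hs (q - p) p (by omega)
  convert this using 3 <;> omega

/-- A strictly descending nodup list is recovered by sorting its `toFinset`. -/
lemma sort_toFinset_eq {l : List ℕ} (hs : l.Pairwise (· > ·)) :
    l.toFinset.sort (· ≥ ·) = l := by
  have hnd : l.Nodup := hs.nodup
  refine (fun hp h1 h2 => List.Perm.eq_of_pairwise' (r := (· ≥ ·)) h1 h2 hp) ?_ ?_ ?_
  · exact List.perm_of_nodup_nodup_toFinset_eq (Finset.sort_nodup _ _) hnd
      (by rw [Finset.sort_toFinset])
  · exact Finset.pairwise_sort _ _
  · exact hs.imp (fun h => le_of_lt h)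

lemma sorted_gt_of_sort (S : Finset ℕ) : (S.sort (· ≥ ·)).Pairwise (· > ·) := by
  have h1 : (S.sort (· ≥ ·)).Pairwise (· ≥ ·) := Finset.pairwise_sort _ _
  have h2 : (S.sort (· ≥ ·)).Nodup := Finset.sort_nodup _ _
  exact (List.Pairwise.and h1 h2).imp (fun ⟨hge, hne⟩ => lt_of_le_of_ne hge (Ne.symm hne))

/-! ### The statistics of a descending list -/

/-- `j` statistic. -/
def jf (L : List ℕ) : ℕ :=
  if (L.getD 0 0 - L.length) % 2 = 1 then L.length else L.length - 1

/-- `i` statistic. -/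
def if' (L : List ℕ) : ℕ := L.getD 0 0 - jf L

/-- `μ` statistic. -/
def μf (L : List ℕ) (a : ℕ) : ℕ := L.getD (a + 1) 0 - (jf L - 1 - a)

section facts

variable {L : List ℕ} (hs : L.Pairwise (· > ·)) (hpos : ∀ x ∈ L, 1 ≤ x) (hne : L ≠ [])

include hs hne in
lemma head_bound {k : ℕ} (hk : k < L.length) : L[k] + k ≤ L.getD 0 0 := by
  have h0 : 0 < L.length := List.length_pos_iff.mpr hne
  rw [List.getD_eq_getElem L 0 h0]
  have := descent' hs (Nat.zero_le k) hk
  omega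

include hs hpos in
lemma tail_bound {k : ℕ} (hk : k < L.length) : L.length - k ≤ L[k] := by
  have hl : L.length - 1 < L.length := by omega
  have := descent' hs (p := k) (q := L.length - 1) (by omega) hl
  have h1 : 1 ≤ L[L.length - 1] := hpos _ (List.getElem_mem hl)
  omega

include hs hpos hne in
lemma len_le_head : L.length ≤ L.getD 0 0 := by
  have h0 : 0 < L.length := List.length_pos_iff.mpr hne
  have := tail_bound hs hpos h0
  have := head_bound hs hne h0
  omega

include hs hpos hne in
lemma jf_le_len : jf L ≤ L.length := by
  unfold jf; split <;> omega

include hs hpos hne in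
lemma len_le_jf : L.length - 1 ≤ jf L := by
  unfold jf; split <;> omega

include hs hpos hne in
lemma if_add_jf : if' L + jf L = L.getD 0 0 := by
  have h0 : 0 < L.length := List.length_pos_iff.mpr hne
  have := len_le_head hs hpos hne
  unfold if' jf; split <;> omega

include hs hpos hne in
lemma if_odd : Odd (if' L) := by
  have h0 : 0 < L.length := List.length_pos_iff.mpr hne
  have := len_le_head hs hpos hne
  rw [Nat.odd_iff]
  unfold if' jf
  split <;> rename_i h <;> omega

include hs hpos hne in
lemma one_le_if : 1 ≤ if' L := by
  have := if_odd hs hpos hne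
  rcases this with ⟨k, hk⟩; omega

include hs hpos hne in
lemma μf_le (a : ℕ) (ha : a < jf L) : μf L a ≤ if' L := by
  have h0 : 0 < L.length := List.length_pos_iff.mpr hne
  have hjl := jf_le_len hs hpos hne
  have hij := if_add_jf hs hpos hne
  unfold μf
  by_cases hk : a + 1 < L.length
  · rw [List.getD_eq_getElem L 0 hk]
    have := head_bound hs hne hk
    omega
  · rw [List.getD_eq_default L 0 (by omega)]
    omega

include hs hpos hne in
lemma μf_anti (a b : ℕ) (hab : a ≤ b) (hb : b < jf L) : μf L b ≤ μf L a := by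
  have hjl := jf_le_len hs hpos hne
  unfold μf
  by_cases hk : b + 1 < L.length
  · rw [List.getD_eq_getElem L 0 hk, List.getD_eq_getElem L 0 (by omega)]
    have := descent' hs (p := a + 1) (q := b + 1) (by omega) hk
    omega
  · rw [List.getD_eq_default L 0 (by omega)]
    omega

include hs hpos in
lemma untrunc {a : ℕ} (ha : a + 1 < L.length) :
    μf L a + (jf L - 1 - a) = L[a + 1] := by
  have := tail_bound hs hpos ha
  have hj : jf L ≤ L.length := by unfold jf; split <;> omega
  unfold μf
  rw [List.getD_eq_getElem L 0 ha]
  omega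

end facts

/-! ### Reconstruction list -/

/-- The raw descending list attached to a triple `(i, j, μ)`. -/
def Mb (i j : ℕ) (μ : ℕ → ℕ) : List ℕ :=
  (i + j) :: List.ofFn (fun a : Fin j => μ a + (j - 1 - (a : ℕ)))

/-- The cleaned list: drop (the only possible) zero. -/
def Mc (i j : ℕ) (μ : ℕ → ℕ) : List ℕ := (Mb i j μ).filter (· ≠ 0)

section bfacts

variable {i j : ℕ} {μ : ℕ → ℕ} (hi : 1 ≤ i) (hle : ∀ a < j, μ a ≤ i)
  (hanti : ∀ a b, a ≤ b → b < j → μ b ≤ μ a)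

include hi hle hanti in
lemma Mb_sorted : (Mb i j μ).Pairwise (· > ·) := by
  unfold Mb
  rw [List.pairwise_cons]
  constructor
  · intro b hb
    rw [List.mem_ofFn] at hb
    obtain ⟨a, rfl⟩ := hb
    have := hle a a.isLt
    have := a.isLt
    beta_reduce
    omega
  · rw [List.pairwise_ofFn]
    intro a b hab
    have h1 := hanti a b (le_of_lt hab) b.isLt
    have : (a : ℕ) < (b : ℕ) := hab
    have := b.isLt
    beta_reduce
    omega

include hi hle hanti in
lemma Mc_sorted : (Mc i j μ).Pairwise (· > ·) :=
  List.Pairwise.filter _ (Mb_sorted hi hle hanti)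

lemma Mc_mem_pos {x : ℕ} (hx : x ∈ Mc i j μ) : 1 ≤ x := by
  unfold Mc at hx
  have := List.of_mem_filter hx
  simp at this
  omega

include hle in
lemma Mc_mem_le {x : ℕ} (hx : x ∈ Mc i j μ) : x ≤ i + j := by
  unfold Mc at hx
  have hx' := List.mem_of_mem_filter hx
  unfold Mb at hx'
  rcases List.mem_cons.mp hx' with h | h
  · omega
  · rw [List.mem_ofFn] at h
    obtain ⟨a, rfl⟩ := h
    have := hle a a.isLt
    have := a.isLt
    beta_reduce
    omega

include hi in
lemma Mc_eq_cons : Mc i j μ =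
    (i + j) :: (List.ofFn (fun a : Fin j => μ a + (j - 1 - (a : ℕ)))).filter (· ≠ 0) := by
  unfold Mc Mb
  rw [List.filter_cons_of_pos (by simp; omega)]

include hi in
lemma Mc_ne_nil : Mc i j μ ≠ [] := by rw [Mc_eq_cons hi]; simp

include hi in
lemma Mc_head : (Mc i j μ).getD 0 0 = i + j := by rw [Mc_eq_cons hi]; rfl

include hi in
lemma Mc_eq_of_pos (hj : 0 < j) (hμ : μ (j - 1) ≠ 0) :
    Mc i j μ = (i + j) :: List.ofFn (fun a : Fin j => μ a + (j - 1 - (a : ℕ))) := by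
  rw [Mc_eq_cons hi]
  congr 1
  rw [List.filter_eq_self]
  intro x hx
  rw [List.mem_ofFn] at hx
  obtain ⟨a, rfl⟩ := hx
  have := a.isLt
  simp only [ne_eq, decide_eq_true_eq]
  rcases Nat.lt_or_ge (a : ℕ) (j - 1) with h | h
  · omega
  · have : (a : ℕ) = j - 1 := by omega
    rw [this]
    omega

include hi in
lemma Mc_eq_of_zero (hj : 0 < j) (hμ : μ (j - 1) = 0) :
    Mc i j μ = (i + j) :: List.ofFn (fun a : Fin (j - 1) => μ a + (j - 1 - (a : ℕ))) := by
  rw [Mc_eq_cons hi]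
  congr 1
  obtain ⟨k, rfl⟩ : ∃ k, j = k + 1 := ⟨j - 1, by omega⟩
  rw [List.ofFn_succ']
  simp only [Nat.add_sub_cancel] at hμ ⊢
  rw [List.concat_eq_append, List.filter_append]
  have h1 : (List.ofFn fun a : Fin k => μ (Fin.castSucc a) + (k - (Fin.castSucc a : ℕ))).filter
      (· ≠ 0) = List.ofFn fun a : Fin k => μ (Fin.castSucc a) + (k - (Fin.castSucc a : ℕ)) := by
    rw [List.filter_eq_self]
    intro x hx
    rw [List.mem_ofFn] at hx
    obtain ⟨a, rfl⟩ := hx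
    have := a.isLt
    simp only [ne_eq, decide_eq_true_eq, Fin.coe_castSucc]
    omega
  rw [h1]
  simp only [Fin.val_last, hμ, Nat.sub_self, Nat.add_zero, Nat.zero_add]
  rw [show (List.filter (· ≠ 0) [0] : List ℕ) = [] from rfl, List.append_nil]
  apply List.ext_getElem (by simp)
  intro a h1' h2'
  simp only [List.getElem_ofFn, Fin.coe_castSucc, Fin.coe_cast]

end bfacts

/-! ### Rebuilding a list from its statistics -/

lemma list_eq_rebuild {L : List ℕ} (hne : L ≠ []) (f : Fin (L.length - 1) → ℕ)
    (hf : ∀ a : Fin (L.length - 1), f a = L.getD ((a : ℕ) + 1) 0) :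
    (L.getD 0 0) :: List.ofFn f = L := by
  have h0 : 0 < L.length := List.length_pos_iff.mpr hne
  apply List.ext_getElem
  · simp; omega
  · intro a h1 h2
    match a with
    | 0 =>
      simp only [List.getElem_cons_zero]
      exact List.getD_eq_getElem L 0 h0
    | Nat.succ b =>
      have hb : b < L.length - 1 := by simp at h1; omega
      simp only [List.getElem_cons_succ, List.getElem_ofFn]
      rw [hf ⟨b, hb⟩]
      exact List.getD_eq_getElem L 0 h2

lemma Mc_congr {i j : ℕ} {μ μ' : ℕ → ℕ} (h : ∀ a < j, μ a = μ' a) :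
    Mc i j μ = Mc i j μ' := by
  have hf : (List.ofFn fun a : Fin j => μ ↑a + (j - 1 - (a : ℕ)))
      = List.ofFn fun a : Fin j => μ' ↑a + (j - 1 - (a : ℕ)) := by
    congr 1
    funext a
    rw [h a a.isLt]
  unfold Mc Mb
  rw [hf]

/-- Forward-backward: rebuilding the list from its statistics. -/
lemma Mc_of_stats {L : List ℕ} (hs : L.Pairwise (· > ·)) (hpos : ∀ x ∈ L, 1 ≤ x)
    (hne : L ≠ []) : Mc (if' L) (jf L) (μf L) = L := by
  have hi := one_le_if hs hpos hne
  have hij := if_add_jf hs hpos hne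
  have h0 : 0 < L.length := List.length_pos_iff.mpr hne
  have hjl := jf_le_len hs hpos hne
  have hlj := len_le_jf hs hpos hne
  by_cases hA : jf L = L.length
  · have hj1 : 0 < jf L := by omega
    have hμ0 : μf L (jf L - 1) = 0 := by
      unfold μf
      rw [List.getD_eq_default L 0 (by omega)]
      omega
    rw [Mc_eq_of_zero hi hj1 hμ0, hij]
    simp only [hA]
    refine list_eq_rebuild hne _ (fun a => by
      have ha : (a : ℕ) + 1 < L.length := by have := a.isLt; omega
      simp only [Fin.coe_cast]
      rw [List.getD_eq_getElem L 0 ha, ← untrunc hs hpos ha, hA])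
  · have hB : jf L = L.length - 1 := by omega
    by_cases hj0 : jf L = 0
    · have hl1 : L.length = 1 := by omega
      have hMc : Mc (if' L) (jf L) (μf L) = [if' L + jf L] := by
        rw [Mc_eq_cons hi, hj0]
        simp
      rw [hMc, hij]
      obtain ⟨a, ha⟩ := List.length_eq_one_iff.mp hl1
      rw [ha]
      rfl
    · have hj1 : 0 < jf L := by omega
      have hμpos : μf L (jf L - 1) ≠ 0 := by
        unfold μf
        have hlt : (jf L - 1) + 1 < L.length := by omega
        rw [List.getD_eq_getElem L 0 hlt]
        have h1 := hpos _ (List.getElem_mem hlt)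
        omega
      rw [Mc_eq_of_pos hi hj1 hμpos, hij]
      simp only [hB]
      refine list_eq_rebuild hne _ (fun a => by
        have ha : (a : ℕ) + 1 < L.length := by have := a.isLt; omega
        simp only [Fin.coe_cast]
        rw [List.getD_eq_getElem L 0 ha, ← untrunc hs hpos ha, hB])

/-- Backward-forward: the statistics of a rebuilt list. -/
lemma Mc_stats {i j : ℕ} {μ : ℕ → ℕ} (hi : 1 ≤ i) (hodd : Odd i)
    (hle : ∀ a < j, μ a ≤ i) :
    jf (Mc i j μ) = j ∧ if' (Mc i j μ) = i ∧ ∀ a < j, μf (Mc i j μ) a = μ a := by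
  have hio : i % 2 = 1 := Nat.odd_iff.mp hodd
  by_cases hj0 : j = 0
  · subst hj0
    have hMc : Mc i 0 μ = [i] := by rw [Mc_eq_cons hi]; simp
    have hjf : jf (Mc i 0 μ) = 0 := by
      unfold jf
      rw [hMc]
      rw [if_neg (by simp; omega)]
      simp
    refine ⟨hjf, ?_, fun a ha => by omega⟩
    unfold if'
    rw [Mc_head hi, hjf]
    omega
  · have hj1 : 0 < j := by omega
    by_cases hμ0 : μ (j - 1) = 0
    · -- shorter list, length j
      have hMc := Mc_eq_of_zero hi hj1 hμ0
      have hlen : (Mc i j μ).length = j := by rw [hMc]; simp; omega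
      have hjf : jf (Mc i j μ) = j := by
        unfold jf
        rw [Mc_head hi, hlen, if_pos (by omega)]
      have hif : if' (Mc i j μ) = i := by
        unfold if'
        rw [Mc_head hi, hjf]
        omega
      refine ⟨hjf, hif, fun a ha => ?_⟩
      by_cases hal : a < j - 1
      · have hget : (Mc i j μ).getD (a + 1) 0 = μ a + (j - 1 - a) := by
          rw [hMc, List.getD_eq_getElem _ 0 (by simp; omega)]
          simp only [List.getElem_cons_succ, List.getElem_ofFn]
        unfold μf
        rw [hget, hjf]
        have := hle a ha
        omega
      · have haj : a = j - 1 := by omega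
        have hget : (Mc i j μ).getD (a + 1) 0 = 0 :=
          List.getD_eq_default _ 0 (by omega)
        unfold μf
        rw [hget, hjf, haj, hμ0]
        omega
    · -- full list, length j + 1
      have hMc := Mc_eq_of_pos hi hj1 hμ0
      have hlen : (Mc i j μ).length = j + 1 := by rw [hMc]; simp
      have hjf : jf (Mc i j μ) = j := by
        unfold jf
        rw [Mc_head hi, hlen, if_neg (by omega)]
        omega
      have hif : if' (Mc i j μ) = i := by
        unfold if'
        rw [Mc_head hi, hjf]
        omega
      refine ⟨hjf, hif, fun a ha => ?_⟩
      have hget : (Mc i j μ).getD (a + 1) 0 = μ a + (j - 1 - a) := by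
        rw [hMc, List.getD_eq_getElem _ 0 (by simp; omega)]
        simp only [List.getElem_cons_succ, List.getElem_ofFn]
      unfold μf
      rw [hget, hjf]
      have := hle a ha
      omega

/-! ### The weight identity -/

lemma sum_stats {L : List ℕ} (hs : L.Pairwise (· > ·)) (hpos : ∀ x ∈ L, 1 ≤ x)
    (hne : L ≠ []) :
    L.sum = if' L + jf L * (jf L + 1) / 2 + ∑ a ∈ Finset.range (jf L), μf L a := by
  have h0 : 0 < L.length := List.length_pos_iff.mpr hne
  have hij := if_add_jf hs hpos hne
  have hjl := jf_le_len hs hpos hne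
  have hlj := len_le_jf hs hpos hne
  obtain ⟨k, hk⟩ : ∃ k, L.length = k + 1 := ⟨L.length - 1, by omega⟩
  have hsum0 : L.sum = ∑ a ∈ Finset.range L.length, L.getD a 0 := by
    conv_lhs => rw [← List.ofFn_get L]
    rw [List.sum_ofFn, ← Fin.sum_univ_eq_sum_range (fun a => L.getD a 0) L.length]
    exact Finset.sum_congr rfl fun i _ => by
      rw [List.get_eq_getElem, List.getD_eq_getElem L 0 i.isLt]
  rw [hk, Finset.sum_range_succ'] at hsum0
  have hCB : ∑ a ∈ Finset.range k, μf L a + ∑ a ∈ Finset.range k, (jf L - 1 - a)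
      = ∑ a ∈ Finset.range k, L.getD (a + 1) 0 := by
    rw [← Finset.sum_add_distrib]
    refine Finset.sum_congr rfl fun a ha => ?_
    have ha' : a + 1 < L.length := by
      have := Finset.mem_range.mp ha; omega
    rw [List.getD_eq_getElem L 0 ha']
    exact untrunc hs hpos ha'
  have hg : (∑ a ∈ Finset.range k, a) * 2 = k * (k - 1) :=
    Finset.sum_range_id_mul_two k
  by_cases hA : jf L = L.length
  · have hA' : jf L = k + 1 := by omega
    have hBsum : ∑ a ∈ Finset.range k, (jf L - 1 - a)
        = (∑ a ∈ Finset.range k, a) + k := by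
      have h1 : ∑ a ∈ Finset.range k, (a + 1) = ∑ a ∈ Finset.range k, (jf L - 1 - a) := by
        rw [← Finset.sum_range_reflect (fun a => jf L - 1 - a) k]
        refine Finset.sum_congr rfl fun a ha => ?_
        have := Finset.mem_range.mp ha
        omega
      rw [← h1, Finset.sum_add_distrib]
      simp
    have hμ0 : μf L k = 0 := by
      unfold μf
      rw [List.getD_eq_default L 0 (by omega)]
      omega
    have hμsplit : ∑ a ∈ Finset.range (jf L), μf L a
        = ∑ a ∈ Finset.range k, μf L a + μf L k := by
      rw [hA', Finset.sum_range_succ]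
    have hq : (k + 1) * ((k + 1) + 1) = k * (k - 1) + 4 * k + 2 := by
      cases k with
      | zero => rfl
      | succ k' =>
        simp only [Nat.succ_sub_one]
        ring
    rw [hμsplit, hA', hq, ← hg]
    omega
  · have hB' : jf L = k := by omega
    have hBsum : ∑ a ∈ Finset.range k, (jf L - 1 - a) = ∑ a ∈ Finset.range k, a := by
      have h1 : ∑ a ∈ Finset.range k, (k - 1 - a) = ∑ a ∈ Finset.range k, a :=
        Finset.sum_range_reflect (fun a => a) k
      rw [← h1]
      exact Finset.sum_congr rfl fun a ha => by rw [hB']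
    have hq : k * (k + 1) = k * (k - 1) + 2 * k := by
      cases k with
      | zero => rfl
      | succ k' =>
        simp only [Nat.succ_sub_one]
        ring
    rw [hB', hq, ← hg]
    omega

/-! ### The equivalence -/

abbrev PT (n : ℕ) := {p : ℕ × ℕ // Odd p.1 ∧ 1 ≤ p.1 ∧ p.1 + p.2 ≤ n}

abbrev QT (n : ℕ) (p : PT n) :=
  {μ : Fin p.val.2 → Fin (p.val.1 + 1) // ∀ a b : Fin p.val.2, a ≤ b → μ b ≤ μ a}

abbrev RT (n : ℕ) := Σ p : PT n, QT n p

abbrev LT (n : ℕ) := {S : Finset ℕ // S.Nonempty ∧ ∀ x ∈ S, 1 ≤ x ∧ x ≤ n}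

def sortOf (n : ℕ) (S : LT n) : List ℕ := S.val.sort (· ≥ ·)

lemma sortOf_sorted (n : ℕ) (S : LT n) : (sortOf n S).Pairwise (· > ·) :=
  sorted_gt_of_sort _

lemma sortOf_pos (n : ℕ) (S : LT n) : ∀ x ∈ sortOf n S, 1 ≤ x :=
  fun x hx => (S.prop.2 x ((Finset.mem_sort _).mp hx)).1

lemma sortOf_ne (n : ℕ) (S : LT n) : sortOf n S ≠ [] := by
  have h1 : (sortOf n S).length = S.val.card := Finset.length_sort _
  have hc : 0 < S.val.card := Finset.card_pos.mpr S.prop.1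
  intro h
  rw [h] at h1
  simp at h1
  omega

lemma sortOf_head_le (n : ℕ) (S : LT n) : (sortOf n S).getD 0 0 ≤ n := by
  have h0 : 0 < (sortOf n S).length := List.length_pos_iff.mpr (sortOf_ne n S)
  rw [List.getD_eq_getElem _ 0 h0]
  exact (S.prop.2 _ ((Finset.mem_sort _).mp (List.getElem_mem h0))).2

/-- The forward map. -/
def fwd (n : ℕ) (S : LT n) : RT n :=
  ⟨⟨(if' (sortOf n S), jf (sortOf n S)),
    if_odd (sortOf_sorted n S) (sortOf_pos n S) (sortOf_ne n S),
    one_le_if (sortOf_sorted n S) (sortOf_pos n S) (sortOf_ne n S),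
    by
      rw [if_add_jf (sortOf_sorted n S) (sortOf_pos n S) (sortOf_ne n S)]
      exact sortOf_head_le n S⟩,
   ⟨fun a => ⟨μf (sortOf n S) a,
      Nat.lt_succ_of_le
        (μf_le (sortOf_sorted n S) (sortOf_pos n S) (sortOf_ne n S) a a.isLt)⟩,
    fun a b hab => by
      simp only [Fin.mk_le_mk]
      exact μf_anti (sortOf_sorted n S) (sortOf_pos n S) (sortOf_ne n S) a b hab b.isLt⟩⟩

/-- Total-function extension of the `μ` of a triple. -/
def μext {n : ℕ} (t : RT n) : ℕ → ℕ :=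
  fun a => if h : a < t.1.val.2 then (t.2.val ⟨a, h⟩ : ℕ) else 0

lemma μext_le {n : ℕ} (t : RT n) : ∀ a < t.1.val.2, μext t a ≤ t.1.val.1 :=
  fun a h => by
    unfold μext
    rw [dif_pos h]
    exact Nat.lt_succ_iff.mp (t.2.val ⟨a, h⟩).isLt

lemma μext_anti {n : ℕ} (t : RT n) :
    ∀ a b, a ≤ b → b < t.1.val.2 → μext t b ≤ μext t a := by
  intro a b hab hb
  unfold μext
  rw [dif_pos hb, dif_pos (lt_of_le_of_lt hab hb)]
  exact t.2.prop ⟨a, lt_of_le_of_lt hab hb⟩ ⟨b, hb⟩ (Fin.mk_le_mk.mpr hab)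

/-- The backward map. -/
def bwd (n : ℕ) (t : RT n) : LT n :=
  ⟨(Mc t.1.val.1 t.1.val.2 (μext t)).toFinset,
   ⟨t.1.val.1 + t.1.val.2, by
      rw [List.mem_toFinset, Mc_eq_cons t.1.prop.2.1]
      exact List.mem_cons_self⟩,
   fun x hx => by
      rw [List.mem_toFinset] at hx
      exact ⟨Mc_mem_pos hx, le_trans (Mc_mem_le (μext_le t) hx) t.1.prop.2.2⟩⟩

lemma my_left_inv (n : ℕ) : ∀ S, bwd n (fwd n S) = S := by
  intro S
  apply Subtype.ext
  show (Mc (if' (sortOf n S)) (jf (sortOf n S)) (μext (fwd n S))).toFinset = S.val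
  have hμ : ∀ a < jf (sortOf n S), μext (fwd n S) a = μf (sortOf n S) a := by
    intro a ha
    unfold μext
    rw [dif_pos (show a < (fwd n S).1.val.2 from ha)]
    rfl
  rw [Mc_congr hμ,
    Mc_of_stats (sortOf_sorted n S) (sortOf_pos n S) (sortOf_ne n S)]
  exact Finset.sort_toFinset _ _

lemma sig_ext {n : ℕ} (x y : RT n) (h1 : x.1.val = y.1.val)
    (h2 : ∀ (a : Fin x.1.val.2) (a' : Fin y.1.val.2), (a : ℕ) = (a' : ℕ) →
      (x.2.val a : ℕ) = (y.2.val a' : ℕ)) : x = y := by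
  obtain ⟨⟨p, hp⟩, ⟨f, hf⟩⟩ := x
  obtain ⟨⟨q, hq⟩, ⟨g, hg⟩⟩ := y
  have h1' : p = q := h1
  subst h1'
  exact congrArg (Sigma.mk _) (Subtype.ext (funext fun a => Fin.ext (h2 a a rfl)))

lemma my_right_inv (n : ℕ) : ∀ t, fwd n (bwd n t) = t := by
  intro t
  have hsB : (Mc t.1.val.1 t.1.val.2 (μext t)).Pairwise (· > ·) :=
    Mc_sorted t.1.prop.2.1 (μext_le t) (μext_anti t)
  have hsort : sortOf n (bwd n t) = Mc t.1.val.1 t.1.val.2 (μext t) :=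
    sort_toFinset_eq hsB
  obtain ⟨hjf, hif, hμf⟩ := Mc_stats t.1.prop.2.1 t.1.prop.1 (μext_le t)
  apply sig_ext
  · apply Prod.ext
    · show if' (sortOf n (bwd n t)) = t.1.val.1
      rw [hsort]
      exact hif
    · show jf (sortOf n (bwd n t)) = t.1.val.2
      rw [hsort]
      exact hjf
  · intro a a' haa
    have ha : (a : ℕ) < t.1.val.2 := by
      rw [← hjf, ← hsort]
      exact a.isLt
    show μf (sortOf n (bwd n t)) (a : ℕ) = (t.2.val a' : ℕ)
    rw [hsort, hμf _ ha]
    unfold μext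
    rw [dif_pos ha]
    exact congrArg (fun x => ((t.2.val x : Fin _) : ℕ)) (Fin.ext haa)

end SPB

theorem strict_partition_bijection (n : ℕ) :
    ∃ e : {S : Finset ℕ // S.Nonempty ∧ ∀ x ∈ S, 1 ≤ x ∧ x ≤ n} ≃
        (Σ p : {p : ℕ × ℕ // Odd p.1 ∧ 1 ≤ p.1 ∧ p.1 + p.2 ≤ n},
          {μ : Fin p.val.2 → Fin (p.val.1 + 1) //
            ∀ a b : Fin p.val.2, a ≤ b → μ b ≤ μ a}),
      ∀ S, (S : {S : Finset ℕ // S.Nonempty ∧ ∀ x ∈ S, 1 ≤ x ∧ x ≤ n}).val.sum id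
        = (e S).1.val.1 + (e S).1.val.2 * ((e S).1.val.2 + 1) / 2
            + ∑ a, ((e S).2.val a : ℕ) := by
  refine ⟨⟨SPB.fwd n, SPB.bwd n, SPB.my_left_inv n, SPB.my_right_inv n⟩, ?_⟩
  intro S
  have h1 : S.val.sum id = (SPB.sortOf n S).sum := by
    calc S.val.sum id = (S.val.toList.map id).sum := (Finset.sum_map_toList _ _).symm
      _ = S.val.toList.sum := by rw [List.map_id]
      _ = (SPB.sortOf n S).sum := ((Finset.sort_perm_toList _ _).sum_eq).symm
  show S.val.sum id
      = SPB.if' (SPB.sortOf n S)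
        + SPB.jf (SPB.sortOf n S) * (SPB.jf (SPB.sortOf n S) + 1) / 2
        + ∑ a : Fin (SPB.jf (SPB.sortOf n S)), SPB.μf (SPB.sortOf n S) (a : ℕ)
  rw [h1, SPB.sum_stats (SPB.sortOf_sorted n S) (SPB.sortOf_pos n S) (SPB.sortOf_ne n S),
    Fin.sum_univ_eq_sum_range]
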